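/- Let a > 0, let c : ℝⁿ → ℝ be twice continuously differentiable, let U ⊆ ℝ × ℝⁿ be a set, and let v : ℝ × ℝⁿ → ℝ be twice continuously differentiable and satisfy the transformed wave equation ∂²v/∂y₀² − a²·∑_{j=1}^{n}[∂²v/∂y_j² + 2·c_j(y)·∂²v/∂y₀∂y_j + c_j(y)²·∂²v/∂y₀² + c_{jj}(y)·∂v/∂y₀] = 0 at every point of U, where c_j = ∂c/∂y_j and c_{jj} = ∂²c/∂y_j². Then the function u(x₀, x) = v(x₀ + c(x), x) satisfies the wave equation ∂²u/∂x₀² − a²·∑_{j=1}^{n} ∂²u/∂x_j² = 0 at every point (x₀, x) such that (x₀ + c(x), x) ∈ U. -/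

import Mathlib

/-- Partial derivative of `v : ℝ × ℝⁿ → ℝ` with respect to the time variable. -/
noncomputable def pT {n : ℕ} (v : ℝ × (Fin n → ℝ) → ℝ) (p : ℝ × (Fin n → ℝ)) : ℝ :=
  deriv (fun t => v (t, p.2)) p.1

/-- Partial derivative of `v : ℝ × ℝⁿ → ℝ` with respect to the `j`-th spatial variable. -/
noncomputable def pS {n : ℕ} (j : Fin n) (v : ℝ × (Fin n → ℝ) → ℝ)
    (p : ℝ × (Fin n → ℝ)) : ℝ :=
  deriv (fun s => v (p.1, Function.update p.2 j s)) (p.2 j)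

/-- Partial derivative of `f : ℝⁿ → ℝ` with respect to the `j`-th variable. -/
noncomputable def pD {n : ℕ} (j : Fin n) (f : (Fin n → ℝ) → ℝ) (x : Fin n → ℝ) : ℝ :=
  deriv (fun s => f (Function.update x j s)) (x j)

section Helpers

variable {n : ℕ} {E : Type*} [NormedAddCommGroup E] [NormedSpace ℝ E]

/-- First-order chain rule along a curve. -/
lemma hasDerivAt_comp_curve {v : E → ℝ} (hv : Differentiable ℝ v)
    {γ : ℝ → E} {d : E} {s₀ : ℝ} (hγ : HasDerivAt γ d s₀) :
    HasDerivAt (fun s => v (γ s)) (fderiv ℝ v (γ s₀) d) s₀ :=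
  (hv (γ s₀)).hasFDerivAt.comp_hasDerivAt s₀ hγ

/-- Second-order chain rule: derivative along a curve of a directional derivative. -/
lemma hasDerivAt_fderiv_comp_curve {v : E → ℝ} (hv' : Differentiable ℝ (fderiv ℝ v))
    {γ : ℝ → E} {d : E} {s₀ : ℝ} (hγ : HasDerivAt γ d s₀) (w : E) :
    HasDerivAt (fun s => fderiv ℝ v (γ s) w)
      (fderiv ℝ (fderiv ℝ v) (γ s₀) d w) s₀ := by
  simpa using ((hv' (γ s₀)).hasFDerivAt.comp_hasDerivAt s₀ hγ).clm_apply
    (hasDerivAt_const s₀ w)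

/-- The second spatial partial reduces to an honest 1-dimensional second derivative. -/
lemma pSS_eq (f : ℝ × (Fin n → ℝ) → ℝ) (t : ℝ) (x : Fin n → ℝ) (j : Fin n) :
    pS j (pS j f) (t, x)
      = deriv (fun s => deriv (fun s' => f (t, Function.update x j s')) s) (x j) := by
  unfold pS
  simp only
  congr 1
  funext s
  simp [Function.update_idem]

/-- Same reduction for `pD`. -/
lemma pDD_eq (f : (Fin n → ℝ) → ℝ) (x : Fin n → ℝ) (j : Fin n) :
    pD j (pD j f) x
      = deriv (fun s => deriv (fun s' => f (Function.update x j s')) s) (x j) := by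
  unfold pD
  congr 1
  funext s
  simp [Function.update_idem]

end Helpers

/-- If `v` is `C²` and satisfies the expanded transformed wave
equation at every point of `U`, then `u(x₀,x) = v(x₀ + c x, x)` satisfies the wave
equation `∂²u/∂x₀² − a²∑ⱼ ∂²u/∂xⱼ² = 0` at every `(x₀,x)` with `(x₀ + c x, x) ∈ U`. -/
theorem solution_transport (n : ℕ) (a : ℝ) (ha : 0 < a)
    (c : (Fin n → ℝ) → ℝ) (hc : ContDiff ℝ 2 c)
    (U : Set (ℝ × (Fin n → ℝ)))
    (v : ℝ × (Fin n → ℝ) → ℝ) (hv : ContDiff ℝ 2 v)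
    (hveq : ∀ q ∈ U,
      pT (pT v) q
        - a ^ 2 * ∑ j,
            (pS j (pS j v) q
              + 2 * pD j c q.2 * pT (pS j v) q
              + (pD j c q.2) ^ 2 * pT (pT v) q
              + pD j (pD j c) q.2 * pT v q) = 0) :
    ∀ (x₀ : ℝ) (x : Fin n → ℝ), (x₀ + c x, x) ∈ U →
      pT (pT (fun q => v (q.1 + c q.2, q.2))) (x₀, x)
        - a ^ 2 * ∑ j, pS j (pS j (fun q => v (q.1 + c q.2, q.2))) (x₀, x) = 0 := by
  intro x₀ x hU
  -- differentiability facts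
  have hvd : Differentiable ℝ v := hv.differentiable (by norm_num)
  have hv'd : Differentiable ℝ (fderiv ℝ v) :=
    (hv.fderiv_right (m := 1) (by norm_num)).differentiable (by norm_num)
  have hcd : Differentiable ℝ c := hc.differentiable (by norm_num)
  have hc'd : Differentiable ℝ (fderiv ℝ c) :=
    (hc.fderiv_right (m := 1) (by norm_num)).differentiable (by norm_num)
  -- notation
  set Q : ℝ × (Fin n → ℝ) := (x₀ + c x, x) with hQ
  set τ : ℝ × (Fin n → ℝ) := (1, 0) with hτ
  set F := fderiv ℝ (fderiv ℝ v) Q with hF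
  set u : ℝ × (Fin n → ℝ) → ℝ := fun q => v (q.1 + c q.2, q.2) with hu
  -- curves
  have htime : ∀ (y : Fin n → ℝ) (t : ℝ),
      HasDerivAt (fun t' : ℝ => (t', y)) τ t := fun y t =>
    (hasDerivAt_id t).prodMk (hasDerivAt_const t y)
  have hspace : ∀ (t : ℝ) (y : Fin n → ℝ) (j : Fin n) (s₀ : ℝ),
      HasDerivAt (fun s : ℝ => ((t, Function.update y j s) : ℝ × (Fin n → ℝ)))
        ((0 : ℝ), Pi.single j 1) s₀ := fun t y j s₀ =>
    (hasDerivAt_const s₀ t).prodMk (hasDerivAt_update y j s₀)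
  -- first derivatives of v
  have hpTv : ∀ (t : ℝ) (y : Fin n → ℝ), pT v (t, y) = fderiv ℝ v (t, y) τ := by
    intro t y
    exact (hasDerivAt_comp_curve hvd (htime y t)).deriv
  have hpSv : ∀ (j : Fin n) (t : ℝ) (y : Fin n → ℝ),
      pS j v (t, y) = fderiv ℝ v (t, y) (0, Pi.single j 1) := by
    intro j t y
    have h := (hasDerivAt_comp_curve hvd (hspace t y j (y j))).deriv
    simpa [pS, Function.update_eq_self] using h
  -- second derivatives of v at Q
  have h1 : pT (pT v) Q = F τ τ := by
    have hfun : (fun t => pT v (t, x)) = fun t => fderiv ℝ v (t, x) τ := by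
      funext t; exact hpTv t x
    show deriv (fun t => pT v (t, x)) (x₀ + c x) = F τ τ
    rw [hfun]
    exact (hasDerivAt_fderiv_comp_curve hv'd (htime x (x₀ + c x)) τ).deriv
  have h2 : ∀ j : Fin n, pT (pS j v) Q = F τ (0, Pi.single j 1) := by
    intro j
    have hfun : (fun t => pS j v (t, x)) = fun t => fderiv ℝ v (t, x) (0, Pi.single j 1) := by
      funext t; exact hpSv j t x
    show deriv (fun t => pS j v (t, x)) (x₀ + c x) = F τ (0, Pi.single j 1)
    rw [hfun]
    exact (hasDerivAt_fderiv_comp_curve hv'd (htime x (x₀ + c x))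
      ((0 : ℝ), Pi.single j 1)).deriv
  have h3 : ∀ j : Fin n,
      pS j (pS j v) Q = F (0, Pi.single j 1) (0, Pi.single j 1) := by
    intro j
    rw [hQ, pSS_eq]
    have hfun : (fun s => deriv (fun s' => v (x₀ + c x, Function.update x j s')) s)
        = fun s => fderiv ℝ v (x₀ + c x, Function.update x j s) (0, Pi.single j 1) := by
      funext s
      exact (hasDerivAt_comp_curve hvd (hspace (x₀ + c x) x j s)).deriv
    rw [hfun]
    have h := (hasDerivAt_fderiv_comp_curve hv'd (hspace (x₀ + c x) x j (x j))
      ((0 : ℝ), Pi.single j 1)).deriv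
    simpa [Function.update_eq_self] using h
  -- derivatives of c
  have h5 : ∀ j : Fin n, pD j c x = fderiv ℝ c x (Pi.single j 1) := by
    intro j
    have h := (hasDerivAt_comp_curve hcd (hasDerivAt_update x j (x j))).deriv
    simpa [pD, Function.update_eq_self] using h
  have h6 : ∀ j : Fin n,
      pD j (pD j c) x = fderiv ℝ (fderiv ℝ c) x (Pi.single j 1) (Pi.single j 1) := by
    intro j
    rw [pDD_eq]
    have hfun : (fun s => deriv (fun s' => c (Function.update x j s')) s)
        = fun s => fderiv ℝ c (Function.update x j s) (Pi.single j 1) := by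
      funext s
      exact (hasDerivAt_comp_curve hcd (hasDerivAt_update x j s)).deriv
    rw [hfun]
    have h := (hasDerivAt_fderiv_comp_curve hc'd (hasDerivAt_update x j (x j))
      (Pi.single j 1)).deriv
    simpa [Function.update_eq_self] using h
  -- symmetry of the second derivative of v
  have hsym : ∀ w₁ w₂, F w₁ w₂ = F w₂ w₁ := fun w₁ w₂ =>
    second_derivative_symmetric (fun y => (hvd y).hasFDerivAt) (hv'd Q).hasFDerivAt w₁ w₂
  -- second time derivative of u
  have h7 : pT (pT u) (x₀, x) = F τ τ := by
    have hinner : ∀ t : ℝ, pT u (t, x) = fderiv ℝ v (t + c x, x) τ := by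
      intro t
      show deriv (fun t' => v (t' + c x, x)) t = _
      have hγ : HasDerivAt (fun t' : ℝ => ((t' + c x, x) : ℝ × (Fin n → ℝ))) τ t :=
        ((hasDerivAt_id t).add_const (c x)).prodMk (hasDerivAt_const t x)
      exact (hasDerivAt_comp_curve hvd hγ).deriv
    have hfun : (fun t => pT u (t, x)) = fun t => fderiv ℝ v (t + c x, x) τ := by
      funext t; exact hinner t
    show deriv (fun t => pT u (t, x)) x₀ = F τ τ
    rw [hfun]
    have hγ : HasDerivAt (fun t : ℝ => ((t + c x, x) : ℝ × (Fin n → ℝ))) τ x₀ :=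
      ((hasDerivAt_id x₀).add_const (c x)).prodMk (hasDerivAt_const x₀ x)
    exact (hasDerivAt_fderiv_comp_curve hv'd hγ τ).deriv
  -- second spatial derivatives of u
  have h8 : ∀ j : Fin n, pS j (pS j u) (x₀, x)
      = F (fderiv ℝ c x (Pi.single j 1), Pi.single j 1)
          (fderiv ℝ c x (Pi.single j 1), Pi.single j 1)
        + fderiv ℝ (fderiv ℝ c) x (Pi.single j 1) (Pi.single j 1) * fderiv ℝ v Q τ := by
    intro j
    rw [pSS_eq]
    have hγ : ∀ s₀ : ℝ, HasDerivAt
        (fun s : ℝ => ((x₀ + c (Function.update x j s), Function.update x j s) :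
          ℝ × (Fin n → ℝ)))
        (fderiv ℝ c (Function.update x j s₀) (Pi.single j 1), Pi.single j 1) s₀ := by
      intro s₀
      exact ((hasDerivAt_comp_curve hcd (hasDerivAt_update x j s₀)).const_add x₀).prodMk
        (hasDerivAt_update x j s₀)
    have hinner : (fun s => deriv (fun s' => u (x₀, Function.update x j s')) s)
        = fun s => fderiv ℝ v (x₀ + c (Function.update x j s), Function.update x j s)
            (fderiv ℝ c (Function.update x j s) (Pi.single j 1), Pi.single j 1) := by
      funext s
      show deriv (fun s' => v (x₀ + c (Function.update x j s'), Function.update x j s')) s = _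
      exact (hasDerivAt_comp_curve hvd (hγ s)).deriv
    rw [hinner]
    -- outer derivative via product rule on the CLM application
    have hB : HasDerivAt
        (fun s => fderiv ℝ v (x₀ + c (Function.update x j s), Function.update x j s))
        (F (fderiv ℝ c x (Pi.single j 1), Pi.single j 1)) (x j) := by
      have h := (hv'd _).hasFDerivAt.comp_hasDerivAt (x j) (hγ (x j))
      simpa [Function.comp_def, Function.update_eq_self, hQ, hF] using h
    have hW : HasDerivAt
        (fun s => ((fderiv ℝ c (Function.update x j s) (Pi.single j 1), Pi.single j 1) :
          ℝ × (Fin n → ℝ)))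
        ((fderiv ℝ (fderiv ℝ c) x (Pi.single j 1) (Pi.single j 1), 0)) (x j) := by
      have hc2 : HasDerivAt (fun s => fderiv ℝ c (Function.update x j s) (Pi.single j 1))
          (fderiv ℝ (fderiv ℝ c) x (Pi.single j 1) (Pi.single j 1)) (x j) := by
        have h := hasDerivAt_fderiv_comp_curve hc'd (hasDerivAt_update x j (x j))
          (Pi.single j 1)
        simpa [Function.update_eq_self] using h
      exact hc2.prodMk (hasDerivAt_const (x j) (Pi.single j 1))
    have hA := hB.clm_apply hW
    rw [hA.deriv]
    have hw0 : ((fderiv ℝ (fderiv ℝ c) x (Pi.single j 1) (Pi.single j 1), (0 : Fin n → ℝ)) :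
        ℝ × (Fin n → ℝ))
        = fderiv ℝ (fderiv ℝ c) x (Pi.single j 1) (Pi.single j 1) • τ := by
      simp [hτ, Prod.smul_def]
    have heval : (fderiv ℝ c (Function.update x j (x j)) (Pi.single j 1), Pi.single j (1:ℝ))
        = ((fderiv ℝ c x (Pi.single j 1), Pi.single j 1) : ℝ × (Fin n → ℝ)) := by
      simp [Function.update_eq_self]
    rw [heval, hw0]
    have : fderiv ℝ v (x₀ + c (Function.update x j (x j)), Function.update x j (x j))
        = fderiv ℝ v Q := by
      simp [Function.update_eq_self, hQ]
    rw [this, map_smul, smul_eq_mul]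
  -- assemble
  have key := hveq Q hU
  have hQ2 : Q.2 = x := rfl
  rw [hQ2] at key
  rw [h1] at key
  rw [Finset.sum_congr rfl (fun j _ => by
    rw [h3 j, h2 j, h5 j, h6 j, hpTv (x₀ + c x) x])] at key
  -- note : pT v Q = fderiv ℝ v Q τ since Q = (x₀ + c x, x)
  rw [h7]
  rw [Finset.sum_congr rfl (fun j _ => h8 j)]
  -- expand the bilinear form
  have hexp : ∀ j : Fin n,
      F (fderiv ℝ c x (Pi.single j 1), Pi.single j 1)
        (fderiv ℝ c x (Pi.single j 1), Pi.single j 1)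
      = F (0, Pi.single j 1) (0, Pi.single j 1)
        + 2 * fderiv ℝ c x (Pi.single j 1) * F τ (0, Pi.single j 1)
        + (fderiv ℝ c x (Pi.single j 1)) ^ 2 * F τ τ := by
    intro j
    have hw : ((fderiv ℝ c x (Pi.single j 1), Pi.single j 1) : ℝ × (Fin n → ℝ))
        = fderiv ℝ c x (Pi.single j 1) • τ + (0, Pi.single j 1) := by
      simp [hτ, Prod.smul_def, Prod.ext_iff]
    rw [hw]
    simp only [map_add, map_smul, ContinuousLinearMap.add_apply,
      ContinuousLinearMap.smul_apply, smul_eq_mul]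
    rw [hsym (0, Pi.single j 1) τ]
    ring
  rw [Finset.sum_congr rfl (fun j _ => by rw [hexp j])]
  rw [hQ]
  exact key
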